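/- Graph-restricted fair exchange admits a globally Pareto-undominated pure Nash equilibrium: let G be a simple undirected graph on the n agents, and suppose every agent's benefit function b_i is continuous, nondecreasing, and concave on [0, ∞) with the vanishing-marginal-value condition, and every cost c_i is positive. Then there exists a nonnegative collection profile X* that is a pure Nash equilibrium of the graph-restricted game and such that no nonnegative profile X' satisfies U_i^G(X') ≥ U_i^G(X*) for all agents i and U_j^G(X') > U_j^G(X*) for some agent j. -/

import Mathlib

open Finset

/-- Agent `i`'s total accessible data under graph-restricted fair exchange. -/
noncomputable def totalG {n : ℕ} (G : SimpleGraph (Fin n)) [DecidableRel G.Adj]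
    (X : Fin n → ℝ) (i : Fin n) : ℝ :=
  X i + ∑ j ∈ G.neighborFinset i, min (X i) (X j)

/-- Agent `i`'s utility in the graph-restricted game. -/
noncomputable def UG {n : ℕ} (G : SimpleGraph (Fin n)) [DecidableRel G.Adj]
    (b : Fin n → ℝ → ℝ) (c : Fin n → ℝ) (X : Fin n → ℝ) (i : Fin n) : ℝ :=
  b i (totalG G X i) - c i * X i

/-- `X` is a (nonnegative) pure Nash equilibrium of the graph-restricted game. -/
def IsNEG {n : ℕ} (G : SimpleGraph (Fin n)) [DecidableRel G.Adj]
    (b : Fin n → ℝ → ℝ) (c : Fin n → ℝ) (X : Fin n → ℝ) : Prop :=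
  (∀ i, 0 ≤ X i) ∧
    ∀ i, ∀ y, 0 ≤ y → UG G b c (Function.update X i y) i ≤ UG G b c X i

section Aux

variable {n : ℕ} (G : SimpleGraph (Fin n)) [DecidableRel G.Adj]
  (b : Fin n → ℝ → ℝ) (c : Fin n → ℝ)

/-- Surrogate total-data function: neighbors in `S` are frozen at value `v j`,
other neighbors are assumed to match `x` fully. -/
noncomputable def Af (i : Fin n) (S : Finset (Fin n)) (v : Fin n → ℝ) (x : ℝ) : ℝ :=
  x + ∑ j ∈ G.neighborFinset i, (if j ∈ S then min x (v j) else x)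

/-- Surrogate utility function. -/
noncomputable def Hf (i : Fin n) (S : Finset (Fin n)) (v : Fin n → ℝ) (x : ℝ) : ℝ :=
  b i (Af G i S v x) - c i * x

/-- `s` is the largest maximizer of the surrogate utility on `[0,∞)`. -/
def IsLM (i : Fin n) (S : Finset (Fin n)) (v : Fin n → ℝ) (s : ℝ) : Prop :=
  0 ≤ s ∧ (∀ x, 0 ≤ x → Hf G b c i S v x ≤ Hf G b c i S v s) ∧
    ∀ x, 0 ≤ x → Hf G b c i S v x = Hf G b c i S v s → x ≤ s

variable {i : Fin n} {S S' : Finset (Fin n)} {v v' : Fin n → ℝ}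

lemma Af_nonneg (hv : ∀ j, 0 ≤ v j) {x : ℝ} (hx : 0 ≤ x) : 0 ≤ Af G i S v x := by
  have : ∀ j ∈ G.neighborFinset i, 0 ≤ (if j ∈ S then min x (v j) else x) := by
    intro j _
    split
    · exact le_min hx (hv j)
    · exact hx
  have h := Finset.sum_nonneg this
  unfold Af
  positivity

lemma Af_le (hx : 0 ≤ (x : ℝ)) : Af G i S v x ≤ (n + 1) * x := by
  have h1 : ∀ j ∈ G.neighborFinset i, (if j ∈ S then min x (v j) else x) ≤ x := by
    intro j _
    split
    · exact min_le_left _ _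
    · exact le_rfl
  have h2 : ∑ j ∈ G.neighborFinset i, (if j ∈ S then min x (v j) else x) ≤
      ∑ _j ∈ G.neighborFinset i, x := Finset.sum_le_sum h1
  have h3 : (G.neighborFinset i).card ≤ n := by
    simpa using Finset.card_le_card (Finset.subset_univ (G.neighborFinset i))
  have h4 : ∑ _j ∈ G.neighborFinset i, x = (G.neighborFinset i).card * x := by
    simp [Finset.sum_const, nsmul_eq_mul]
  have h5 : ((G.neighborFinset i).card : ℝ) * x ≤ (n : ℝ) * x := by
    apply mul_le_mul_of_nonneg_right _ hx
    exact_mod_cast h3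
  unfold Af
  nlinarith

lemma Af_combo (hv : ∀ j, 0 ≤ v j) {x y a e : ℝ} (hx : 0 ≤ x) (hy : 0 ≤ y)
    (ha : 0 ≤ a) (he : 0 ≤ e) (hae : a + e = 1) :
    a * Af G i S v x + e * Af G i S v y ≤ Af G i S v (a * x + e * y) := by
  unfold Af
  have hterm : ∀ j ∈ G.neighborFinset i,
      a * (if j ∈ S then min x (v j) else x) + e * (if j ∈ S then min y (v j) else y) ≤
        (if j ∈ S then min (a * x + e * y) (v j) else (a * x + e * y)) := by
    intro j _
    split
    · apply le_min
      · have h1 := min_le_left x (v j); have h2 := min_le_left y (v j)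
        have := mul_le_mul_of_nonneg_left h1 ha
        have := mul_le_mul_of_nonneg_left h2 he
        linarith
      · have h1 := min_le_right x (v j); have h2 := min_le_right y (v j)
        have e1 := mul_le_mul_of_nonneg_left h1 ha
        have e2 := mul_le_mul_of_nonneg_left h2 he
        have e3 : a * v j + e * v j = v j := by rw [← add_mul, hae, one_mul]
        linarith
    · exact le_rfl
  have := Finset.sum_le_sum hterm
  rw [Finset.sum_add_distrib, ← Finset.mul_sum, ← Finset.mul_sum] at this
  nlinarith

lemma Af_continuous : Continuous (Af G i S v) := by
  unfold Af
  apply Continuous.add continuous_id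
  apply continuous_finset_sum
  intro j _
  split
  · exact Continuous.min continuous_id continuous_const
  · exact continuous_id

lemma Hf_concave (hbm : MonotoneOn (b i) (Set.Ici 0)) (hbconc : ConcaveOn ℝ (Set.Ici 0) (b i))
    (hv : ∀ j, 0 ≤ v j) : ConcaveOn ℝ (Set.Ici 0) (Hf G b c i S v) := by
  constructor
  · exact convex_Ici 0
  · intro x hx y hy a e ha he hae
    simp only [Set.mem_Ici] at hx hy
    simp only [smul_eq_mul]
    unfold Hf
    have h1 : 0 ≤ Af G i S v x := Af_nonneg G hv hx
    have h2 : 0 ≤ Af G i S v y := Af_nonneg G hv hy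
    have h3 : 0 ≤ a * Af G i S v x + e * Af G i S v y := by positivity
    have h4 := Af_combo G hv hx hy ha he hae (S := S) (i := i)
    have h5 : 0 ≤ Af G i S v (a * x + e * y) := Af_nonneg G hv (by positivity)
    have h6 : b i (a * Af G i S v x + e * Af G i S v y) ≤ b i (Af G i S v (a * x + e * y)) :=
      hbm h3 h5 h4
    have h7 := hbconc.2 (Set.mem_Ici.2 h1) (Set.mem_Ici.2 h2) ha he hae
    simp only [smul_eq_mul] at h7
    nlinarith

lemma Hf_congr (hS : S = S') (hvv : ∀ j ∈ S, v j = v' j) (x : ℝ) :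
    Hf G b c i S v x = Hf G b c i S' v' x := by
  subst hS
  have hsum : ∑ j ∈ G.neighborFinset i, (if j ∈ S then min x (v j) else x) =
      ∑ j ∈ G.neighborFinset i, (if j ∈ S then min x (v' j) else x) := by
    apply Finset.sum_congr rfl
    intro j _
    by_cases h : j ∈ S
    · simp [h, hvv j h]
    · simp [h]
  unfold Hf Af
  rw [hsum]

/-- Chord inequality for concave functions. -/
lemma concave_chord {f : ℝ → ℝ} (hf : ConcaveOn ℝ (Set.Ici 0) f) {x u s : ℝ}
    (hx : 0 ≤ x) (hxu : x ≤ u) (hus : u ≤ s) (hfs : f x ≤ f s) : f x ≤ f u := by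
  rcases eq_or_lt_of_le (hxu.trans hus) with h | h
  · have hxu' : x = u := le_antisymm hxu (h ▸ hus)
    rw [← hxu']
  · set a : ℝ := (s - u) / (s - x) with ha
    set e : ℝ := (u - x) / (s - x) with he
    have hsx : 0 < s - x := by linarith
    have ha0 : 0 ≤ a := div_nonneg (by linarith) (by linarith)
    have he0 : 0 ≤ e := div_nonneg (by linarith) (by linarith)
    have hae : a + e = 1 := by
      rw [ha, he, ← add_div]
      field_simp
      ring
    have hcomb : a * x + e * s = u := by
      rw [ha, he]
      field_simp
      ring
    have h2 := hf.2 (Set.mem_Ici.2 hx) (Set.mem_Ici.2 (hx.trans (hxu.trans hus))) ha0 he0 hae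
    simp only [smul_eq_mul, hcomb] at h2
    have e1 := mul_le_mul_of_nonneg_left hfs he0
    have e2 : a * f x + e * f x = f x := by rw [← add_mul, hae, one_mul]
    linarith

/-- From the vanishing-marginal-value condition and concavity, `b i` admits a linear
upper bound with arbitrarily small slope. -/
lemma exists_linear_bound (hbm : MonotoneOn (b i) (Set.Ici 0))
    (hbconc : ConcaveOn ℝ (Set.Ici 0) (b i))
    (hvan : Filter.Tendsto (fun t : ℝ => b i (t + 1) - b i t) Filter.atTop (nhds 0))
    {ε : ℝ} (hε : 0 < ε) : ∃ B0 : ℝ, ∀ t, 0 ≤ t → b i t ≤ B0 + ε * t := by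
  have hev : ∀ᶠ t in Filter.atTop, b i (t + 1) - b i t < ε :=
    hvan.eventually (gt_mem_nhds hε)
  obtain ⟨T0, hT0⟩ := Filter.eventually_atTop.mp hev
  set T : ℝ := max T0 0 with hT
  have hT0' : 0 ≤ T := le_max_right _ _
  have hstep : b i (T + 1) - b i T < ε := hT0 T (le_max_left _ _)
  refine ⟨b i (T + 1), ?_⟩
  intro t ht
  by_cases hcase : t ≤ T + 1
  · have : b i t ≤ b i (T + 1) := hbm (Set.mem_Ici.2 ht) (Set.mem_Ici.2 (by linarith)) hcase
    nlinarith
  · push_neg at hcase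
    set a : ℝ := (t - T)⁻¹ with ha
    have htT : 1 < t - T := by linarith
    have ha0 : 0 < a := by rw [ha]; positivity
    have ha1 : a < 1 := by
      rw [ha]
      rw [inv_lt_one_iff₀]
      right; exact htT
    have hae : a + (1 - a) = 1 := by ring
    have hcomb : a * t + (1 - a) * T = T + 1 := by
      have : a * (t - T) = 1 := inv_mul_cancel₀ (by linarith)
      nlinarith
    have h2 := hbconc.2 (Set.mem_Ici.2 (by linarith : (0:ℝ) ≤ t))
      (Set.mem_Ici.2 hT0') (le_of_lt ha0) (by linarith) hae
    simp only [smul_eq_mul, hcomb] at h2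
    -- h2 : a * b i t + (1 - a) * b i T ≤ b i (T + 1)
    have hmono : b i T ≤ b i (T + 1) :=
      hbm (Set.mem_Ici.2 hT0') (Set.mem_Ici.2 (by linarith)) (by linarith)
    -- multiply through by (t - T) > 0
    have hmul : (t - T) * a = 1 := mul_inv_cancel₀ (by linarith)
    have key : b i t ≤ b i T + (t - T) * (b i (T + 1) - b i T) := by
      have h3 : (t - T) * (a * b i t + (1 - a) * b i T) ≤ (t - T) * b i (T + 1) :=
        mul_le_mul_of_nonneg_left h2 (by linarith)
      have h4 : (t - T) * (a * b i t) = b i t := by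
        rw [← mul_assoc, hmul, one_mul]
      nlinarith
    have hεs : b i (T + 1) - b i T ≤ ε := le_of_lt hstep
    have h5 : (t - T) * (b i (T + 1) - b i T) ≤ (t - T) * ε :=
      mul_le_mul_of_nonneg_left hεs (by linarith)
    nlinarith

/-- Existence of a largest maximizer of the surrogate utility. -/
lemma exists_lm (hci : 0 < c i) (hbc : ContinuousOn (b i) (Set.Ici 0))
    (hbm : MonotoneOn (b i) (Set.Ici 0)) (hbconc : ConcaveOn ℝ (Set.Ici 0) (b i))
    (hvan : Filter.Tendsto (fun t : ℝ => b i (t + 1) - b i t) Filter.atTop (nhds 0))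
    (hv : ∀ j, 0 ≤ v j) : ∃ s, IsLM G b c i S v s := by
  have hε : (0:ℝ) < c i / (2 * (n + 1)) := by positivity
  obtain ⟨B0, hB0⟩ := exists_linear_bound b hbm hbconc hvan hε
  set ε : ℝ := c i / (2 * (n + 1)) with hεdef
  -- upper bound for Hf
  have hub : ∀ x : ℝ, 0 ≤ x → Hf G b c i S v x ≤ B0 - (c i / 2) * x := by
    intro x hx
    have h1 : Af G i S v x ≤ (n + 1) * x := Af_le G hx
    have h2 : 0 ≤ Af G i S v x := Af_nonneg G hv hx
    have h3 : b i (Af G i S v x) ≤ B0 + ε * Af G i S v x := hB0 _ h2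
    have h4 : ε * Af G i S v x ≤ ε * ((n + 1) * x) := mul_le_mul_of_nonneg_left h1 (le_of_lt hε)
    have h5 : ε * ((n + 1) * x) = (c i / 2) * x := by
      rw [hεdef]
      field_simp
    unfold Hf
    nlinarith
  -- radius beyond which Hf is below Hf 0
  set R : ℝ := max 0 ((B0 - b i 0) * 2 / c i + 1) with hR
  have hR0 : 0 ≤ R := le_max_left _ _
  have hA0 : Af G i S v 0 = 0 := by
    unfold Af
    have hz : ∀ j ∈ G.neighborFinset i, (if j ∈ S then min 0 (v j) else (0:ℝ)) = 0 := by
      intro j _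
      split
      · exact min_eq_left (hv j)
      · rfl
    rw [Finset.sum_congr rfl hz]
    simp
  have hH0 : Hf G b c i S v 0 = b i 0 := by
    unfold Hf
    rw [hA0]
    ring
  have hfar : ∀ x : ℝ, R < x → Hf G b c i S v x < Hf G b c i S v 0 := by
    intro x hx
    have hx0 : 0 ≤ x := le_trans hR0 (le_of_lt hx)
    have h6 : (B0 - b i 0) * 2 / c i + 1 ≤ R := le_max_right _ _
    have hx2 : (B0 - b i 0) * 2 / c i + 1 < x := lt_of_le_of_lt h6 hx
    have hD : (c i / 2) * ((B0 - b i 0) * 2 / c i) = B0 - b i 0 := by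
      field_simp
    have h7 : (c i / 2) * ((B0 - b i 0) * 2 / c i + 1) < (c i / 2) * x :=
      mul_lt_mul_of_pos_left hx2 (by positivity)
    have h8 := hub x hx0
    rw [hH0]
    nlinarith
  -- maximize over the compact interval [0, R]
  have hcont : ContinuousOn (Hf G b c i S v) (Set.Icc 0 R) := by
    unfold Hf
    apply ContinuousOn.sub
    · apply ContinuousOn.comp hbc (Af_continuous G).continuousOn
      intro x hx
      exact Set.mem_Ici.2 (Af_nonneg G hv hx.1)
    · exact (continuous_const.mul continuous_id).continuousOn
  have hne : (Set.Icc (0:ℝ) R).Nonempty := ⟨0, Set.left_mem_Icc.2 hR0⟩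
  obtain ⟨s0, hs0mem, hs0max⟩ := isCompact_Icc.exists_isMaxOn hne hcont
  have hglob : ∀ x : ℝ, 0 ≤ x → Hf G b c i S v x ≤ Hf G b c i S v s0 := by
    intro x hx
    by_cases hxR : x ≤ R
    · exact hs0max (Set.mem_Icc.2 ⟨hx, hxR⟩)
    · push_neg at hxR
      have h1 := hfar x hxR
      have h2 : Hf G b c i S v 0 ≤ Hf G b c i S v s0 :=
        hs0max (Set.left_mem_Icc.2 hR0)
      linarith
  -- the set of maximizers in [0, R] is compact; take its largest element
  set M : Set ℝ := Set.Icc 0 R ∩ (Hf G b c i S v) ⁻¹' {Hf G b c i S v s0} with hM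
  have hMclosed : IsClosed M :=
    hcont.preimage_isClosed_of_isClosed isClosed_Icc isClosed_singleton
  have hMcomp : IsCompact M :=
    IsCompact.of_isClosed_subset isCompact_Icc hMclosed Set.inter_subset_left
  have hMne : M.Nonempty := ⟨s0, hs0mem, rfl⟩
  obtain ⟨s, hsM, hsmax⟩ := hMcomp.exists_isMaxOn hMne continuousOn_id
  have hsval : Hf G b c i S v s = Hf G b c i S v s0 := hsM.2
  refine ⟨s, hsM.1.1, ?_, ?_⟩
  · intro x hx
    rw [hsval]
    exact hglob x hx
  · intro x hx hxeq
    by_cases hxR : x ≤ R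
    · have hxM : x ∈ M := ⟨Set.mem_Icc.2 ⟨hx, hxR⟩, by rw [Set.mem_preimage, hxeq, hsval]; rfl⟩
      exact hsmax hxM
    · push_neg at hxR
      exfalso
      have h1 := hfar x hxR
      have h2 : Hf G b c i S v 0 ≤ Hf G b c i S v s0 := hs0max (Set.left_mem_Icc.2 hR0)
      rw [hxeq, hsval] at h1
      linarith

lemma IsLM_congr (hS : S = S') (hvv : ∀ j ∈ S, v j = v' j) {s : ℝ}
    (h : IsLM G b c i S v s) : IsLM G b c i S' v' s := by
  refine ⟨h.1, ?_, ?_⟩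
  · intro x hx
    rw [← Hf_congr G b c hS hvv x, ← Hf_congr G b c hS hvv s]
    exact h.2.1 x hx
  · intro x hx hxe
    rw [← Hf_congr G b c hS hvv x, ← Hf_congr G b c hS hvv s] at hxe
    exact h.2.2 x hx hxe

lemma rec_freeze (hc : ∀ i, 0 < c i)
    (hbc : ∀ i, ContinuousOn (b i) (Set.Ici 0))
    (hbm : ∀ i, MonotoneOn (b i) (Set.Ici 0))
    (hbconc : ∀ i, ConcaveOn ℝ (Set.Ici 0) (b i))
    (hvan : ∀ i, Filter.Tendsto (fun t : ℝ => b i (t + 1) - b i t) Filter.atTop (nhds 0)) :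
    ∀ (k : ℕ) (R : Finset (Fin n)) (Y : Fin n → ℝ) (ρ : Fin n → ℕ),
      R.card = k →
      (∀ j, 0 ≤ Y j) →
      (∀ j j', j ∉ R → j' ∉ R → ρ j < ρ j' → Y j ≤ Y j') →
      (∀ j, j ∉ R → ρ j < n - R.card) →
      (∀ j j', j ∉ R → j' ∉ R → j ≠ j' → ρ j ≠ ρ j') →
      (∀ i ∈ R, ∃ s, IsLM G b c i (univ.filter (fun j => j ∉ R)) Y s ∧
        ∀ j, j ∉ R → Y j ≤ s) →
      (∀ i, i ∉ R → IsLM G b c i (univ.filter (fun j => j ∉ R ∧ ρ j < ρ i)) Y (Y i)) →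
      ∃ (Z : Fin n → ℝ) (σ : Fin n → ℕ),
        (∀ j, 0 ≤ Z j) ∧ (∀ j j', σ j < σ j' → Z j ≤ Z j') ∧
        Function.Injective σ ∧
        (∀ i, IsLM G b c i (univ.filter (fun j => σ j < σ i)) Z (Z i)) := by
  intro k
  induction k with
  | zero =>
    intro R Y ρ hcard h0 h1 h2 hinj h3 h4
    have hR : R = ∅ := Finset.card_eq_zero.mp hcard
    subst hR
    refine ⟨Y, ρ, h0, ?_, ?_, ?_⟩
    · intro j j' hlt
      exact h1 j j' (Finset.notMem_empty j) (Finset.notMem_empty j') hlt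
    · intro a a' haa
      by_contra hne
      exact hinj a a' (Finset.notMem_empty a) (Finset.notMem_empty a') hne haa
    · intro i
      have hset : (univ.filter (fun j => j ∉ (∅ : Finset (Fin n)) ∧ ρ j < ρ i)) =
          (univ.filter (fun j => ρ j < ρ i)) := by
        ext j
        simp
      have := h4 i (Finset.notMem_empty i)
      rw [hset] at this
      exact this
  | succ k IH =>
    intro R Y ρ hcard h0 h1 h2 hinj h3 h4
    have hRne : R.Nonempty := Finset.card_pos.mp (by omega)
    have hkn : k + 1 ≤ n := by
      have := Finset.card_le_card (Finset.subset_univ R)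
      simpa [hcard] using this
    -- choice of the candidate stopping values
    set f : Fin n → ℝ := fun i => if h : i ∈ R then (h3 i h).choose else 0 with hfdef
    obtain ⟨i0, hi0R, hmin⟩ := R.exists_min_image f hRne
    have hf0 : IsLM G b c i0 (univ.filter (fun j => j ∉ R)) Y (f i0) ∧
        ∀ j, j ∉ R → Y j ≤ f i0 := by
      have : f i0 = (h3 i0 hi0R).choose := by rw [hfdef]; simp [hi0R]
      rw [this]
      exact (h3 i0 hi0R).choose_spec
    set v0 : ℝ := f i0 with hv0def
    have hv00 : 0 ≤ v0 := hf0.1.1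
    set R' : Finset (Fin n) := R.erase i0 with hR'def
    set Y' : Fin n → ℝ := Function.update Y i0 v0 with hY'def
    set B : ℕ := n - (k + 1) with hBdef
    set ρ' : Fin n → ℕ := Function.update ρ i0 B with hρ'def
    have hcard' : R'.card = k := by
      rw [hR'def, Finset.card_erase_of_mem hi0R, hcard]
      omega
    have hmemR' : ∀ j, j ∉ R' ↔ (j = i0 ∨ j ∉ R) := by
      intro j
      rw [hR'def]
      by_cases hj : j = i0
      · simp [hj, Finset.mem_erase]
      · simp [Finset.mem_erase, hj]
    have hY'eq : ∀ j, j ≠ i0 → Y' j = Y j := by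
      intro j hj
      rw [hY'def]
      exact Function.update_of_ne hj _ _
    have hY'i0 : Y' i0 = v0 := by rw [hY'def]; exact Function.update_self _ _ _
    have hρ'eq : ∀ j, j ≠ i0 → ρ' j = ρ j := by
      intro j hj
      rw [hρ'def]
      exact Function.update_of_ne hj _ _
    have hρ'i0 : ρ' i0 = B := by rw [hρ'def]; exact Function.update_self _ _ _
    have hcardR : R.card = k + 1 := hcard
    -- new nonnegativity
    have h0' : ∀ j, 0 ≤ Y' j := by
      intro j
      by_cases hj : j = i0
      · rw [hj, hY'i0]; exact hv00
      · rw [hY'eq j hj]; exact h0 j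
    -- values at most v0 among the frozen
    have hYlev0 : ∀ j, j ∉ R' → Y' j ≤ v0 := by
      intro j hj
      rcases (hmemR' j).mp hj with hj0 | hjR
      · rw [hj0, hY'i0]
      · by_cases hj0 : j = i0
        · rw [hj0, hY'i0]
        · rw [hY'eq j hj0]; exact hf0.2 j hjR
    -- order-compatibility of values
    have h1' : ∀ j j', j ∉ R' → j' ∉ R' → ρ' j < ρ' j' → Y' j ≤ Y' j' := by
      intro j j' hj hj' hlt
      rcases (hmemR' j).mp hj with hj0 | hjR
      · rw [hj0] at hlt
        rcases (hmemR' j').mp hj' with hj0' | hjR'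
        · rw [hj0'] at hlt
          exact absurd hlt (lt_irrefl _)
        · by_cases hj0' : j' = i0
          · rw [hj0'] at hlt
            exact absurd hlt (lt_irrefl _)
          · rw [hρ'i0, hρ'eq j' hj0'] at hlt
            have := h2 j' hjR'
            rw [hcardR] at this
            omega
      · by_cases hj0 : j = i0
        · rw [hj0] at hlt
          rcases (hmemR' j').mp hj' with hj0' | hjR'
          · rw [hj0'] at hlt
            exact absurd hlt (lt_irrefl _)
          · by_cases hj0' : j' = i0
            · rw [hj0'] at hlt
              exact absurd hlt (lt_irrefl _)
            · rw [hρ'i0, hρ'eq j' hj0'] at hlt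
              have := h2 j' hjR'
              rw [hcardR] at this
              omega
        · rw [hY'eq j hj0]
          by_cases hj0' : j' = i0
          · rw [hj0', hY'i0]
            exact hf0.2 j hjR
          · rcases (hmemR' j').mp hj' with hj0'' | hjR'
            · exact absurd hj0'' hj0'
            · rw [hY'eq j' hj0']
              rw [hρ'eq j hj0, hρ'eq j' hj0'] at hlt
              exact h1 j j' hjR hjR' hlt
    -- rank bounds
    have h2' : ∀ j, j ∉ R' → ρ' j < n - R'.card := by
      intro j hj
      rw [hcard']
      rcases (hmemR' j).mp hj with hj0 | hjR
      · rw [hj0, hρ'i0, hBdef]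
        omega
      · by_cases hj0 : j = i0
        · rw [hj0, hρ'i0, hBdef]; omega
        · rw [hρ'eq j hj0]
          have := h2 j hjR
          rw [hcardR] at this
          omega
    -- injectivity of ranks among frozen
    have hinj' : ∀ j j', j ∉ R' → j' ∉ R' → j ≠ j' → ρ' j ≠ ρ' j' := by
      intro j j' hj hj' hne
      by_cases hj0 : j = i0
      · have hj0' : j' ≠ i0 := fun h => hne (hj0.trans h.symm)
        rcases (hmemR' j').mp hj' with h | hjR'
        · exact absurd h hj0'
        · rw [hj0, hρ'i0, hρ'eq j' hj0']
          have := h2 j' hjR'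
          rw [hcardR] at this
          rw [hBdef]
          omega
      · by_cases hj0' : j' = i0
        · subst hj0'
          rcases (hmemR' j).mp hj with h | hjR
          · exact absurd h hj0
          · rw [hρ'i0, hρ'eq j hj0]
            have := h2 j hjR
            rw [hcardR] at this
            rw [hBdef]
            omega
        · rw [hρ'eq j hj0, hρ'eq j' hj0']
          rcases (hmemR' j).mp hj with h | hjR
          · exact absurd h hj0
          · rcases (hmemR' j').mp hj' with h | hjR'
            · exact absurd h hj0'
            · exact hinj j j' hjR hjR' hne
    -- key pointwise comparison of surrogate utilities below level v0
    have hHeq : ∀ i : Fin n, i ∈ R' → ∀ x : ℝ, x ≤ v0 →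
        Hf G b c i (univ.filter (fun j => j ∉ R')) Y' x =
          Hf G b c i (univ.filter (fun j => j ∉ R)) Y x := by
      intro i _ x hxv
      unfold Hf Af
      have hsum : (∑ j ∈ G.neighborFinset i,
            (if j ∈ univ.filter (fun j => j ∉ R') then min x (Y' j) else x)) =
          ∑ j ∈ G.neighborFinset i,
            (if j ∈ univ.filter (fun j => j ∉ R) then min x (Y j) else x) := by
        apply Finset.sum_congr rfl
        intro j _
        by_cases hji : j = i0
        · have hm1 : j ∈ univ.filter (fun j => j ∉ R') := by
            simp only [Finset.mem_filter, Finset.mem_univ, true_and]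
            exact (hmemR' j).mpr (Or.inl hji)
          have hm2 : j ∉ univ.filter (fun j => j ∉ R) := by
            simp only [Finset.mem_filter, Finset.mem_univ, true_and, not_not]
            rw [hji]
            exact hi0R
          rw [if_pos hm1, if_neg hm2, hji, hY'i0]
          exact min_eq_left hxv
        · have hmem : (j ∈ univ.filter (fun j => j ∉ R')) ↔
              (j ∈ univ.filter (fun j => j ∉ R)) := by
            simp only [Finset.mem_filter, Finset.mem_univ, true_and]
            constructor
            · intro hj
              rcases (hmemR' j).mp hj with h | h
              · exact absurd h hji
              · exact h
            · intro hj
              rw [hmemR' j]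
              exact Or.inr hj
          by_cases hm : j ∈ univ.filter (fun j => j ∉ R')
          · rw [if_pos hm, if_pos (hmem.mp hm), hY'eq j hji]
          · rw [if_neg hm, if_neg (fun h => hm (hmem.mpr h))]
      rw [hsum]
    -- the freeze invariant propagates
    have h3' : ∀ i ∈ R', ∃ s, IsLM G b c i (univ.filter (fun j => j ∉ R')) Y' s ∧
        ∀ j, j ∉ R' → Y' j ≤ s := by
      intro i hiR'
      have hiR : i ∈ R := Finset.mem_of_mem_erase hiR'
      have hii0 : i ≠ i0 := Finset.ne_of_mem_erase hiR'
      obtain ⟨s', hs'⟩ := exists_lm G b c (i := i) (S := univ.filter (fun j => j ∉ R'))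
        (v := Y') (hc i) (hbc i) (hbm i) (hbconc i) (hvan i) h0'
      refine ⟨s', hs', ?_⟩
      have hv0s' : v0 ≤ s' := by
        by_contra hlt
        push_neg at hlt
        -- old largest maximizer for i
        have hfi : IsLM G b c i (univ.filter (fun j => j ∉ R)) Y (f i) ∧
            ∀ j, j ∉ R → Y j ≤ f i := by
          have : f i = (h3 i hiR).choose := by rw [hfdef]; simp [hiR]
          rw [this]
          exact (h3 i hiR).choose_spec
        have hv0fi : v0 ≤ f i := hmin i hiR
        have hconcold : ConcaveOn ℝ (Set.Ici 0) (Hf G b c i (univ.filter (fun j => j ∉ R)) Y) :=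
          Hf_concave G b c (hbm i) (hbconc i) h0
        have hs'0 : 0 ≤ s' := hs'.1
        have e1 : Hf G b c i (univ.filter (fun j => j ∉ R')) Y' s' =
            Hf G b c i (univ.filter (fun j => j ∉ R)) Y s' := hHeq i hiR' s' (le_of_lt hlt)
        have e2 : Hf G b c i (univ.filter (fun j => j ∉ R')) Y' v0 =
            Hf G b c i (univ.filter (fun j => j ∉ R)) Y v0 := hHeq i hiR' v0 le_rfl
        have e3 : Hf G b c i (univ.filter (fun j => j ∉ R)) Y s' ≤
            Hf G b c i (univ.filter (fun j => j ∉ R)) Y (f i) := hfi.1.2.1 s' hs'0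
        have e4 : Hf G b c i (univ.filter (fun j => j ∉ R)) Y s' ≤
            Hf G b c i (univ.filter (fun j => j ∉ R)) Y v0 :=
          concave_chord hconcold hs'0 (le_of_lt hlt) hv0fi e3
        have e5 : Hf G b c i (univ.filter (fun j => j ∉ R')) Y' v0 ≤
            Hf G b c i (univ.filter (fun j => j ∉ R')) Y' s' := hs'.2.1 v0 hv00
        have e6 : Hf G b c i (univ.filter (fun j => j ∉ R')) Y' v0 =
            Hf G b c i (univ.filter (fun j => j ∉ R')) Y' s' := by linarith
        have := hs'.2.2 v0 hv00 e6
        linarith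
      intro j hj
      exact le_trans (hYlev0 j hj) hv0s'
    -- optimality records propagate
    have h4' : ∀ i, i ∉ R' → IsLM G b c i (univ.filter (fun j => j ∉ R' ∧ ρ' j < ρ' i)) Y' (Y' i) := by
      intro i hiR'
      by_cases hi0 : i = i0
      · rw [hi0]
        have hset : (univ.filter (fun j => j ∉ R' ∧ ρ' j < ρ' i0)) =
            (univ.filter (fun j => j ∉ R)) := by
          ext j
          simp only [Finset.mem_filter, Finset.mem_univ, true_and]
          constructor
          · rintro ⟨hj1, hj2⟩
            by_cases hji : j = i0
            · rw [hji, hρ'i0] at hj2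
              exact absurd hj2 (lt_irrefl _)
            · rcases (hmemR' j).mp hj1 with h | h
              · exact absurd h hji
              · exact h
          · intro hj
            have hji : j ≠ i0 := fun h => (h ▸ hj) hi0R
            refine ⟨(hmemR' j).mpr (Or.inr hj), ?_⟩
            rw [hρ'eq j hji, hρ'i0]
            have := h2 j hj
            rw [hcardR] at this
            exact this
        rw [hset, hY'i0]
        apply IsLM_congr G b c rfl (v := Y) (v' := Y')
        · intro j hj
          simp only [Finset.mem_filter, Finset.mem_univ, true_and] at hj
          have hji : j ≠ i0 := fun h => (h ▸ hj) hi0R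
          rw [hY'eq j hji]
        · exact hf0.1
      · have hiR : i ∉ R := by
          rcases (hmemR' i).mp hiR' with h | h
          · exact absurd h hi0
          · exact h
        have hset : (univ.filter (fun j => j ∉ R' ∧ ρ' j < ρ' i)) =
            (univ.filter (fun j => j ∉ R ∧ ρ j < ρ i)) := by
          ext j
          simp only [Finset.mem_filter, Finset.mem_univ, true_and]
          rw [hρ'eq i hi0]
          by_cases hji : j = i0
          · rw [hji, hρ'i0]
            constructor
            · rintro ⟨_, hj2⟩
              have := h2 i hiR
              rw [hcardR] at this
              rw [hBdef] at hj2
              omega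
            · rintro ⟨hj1, _⟩
              exact absurd hi0R hj1
          · rw [hρ'eq j hji]
            constructor
            · rintro ⟨hj1, hj2⟩
              rcases (hmemR' j).mp hj1 with h | h
              · exact absurd h hji
              · exact ⟨h, hj2⟩
            · rintro ⟨hj1, hj2⟩
              exact ⟨(hmemR' j).mpr (Or.inr hj1), hj2⟩
        rw [hset]
        have hYi : Y' i = Y i := hY'eq i hi0
        rw [hYi]
        apply IsLM_congr G b c rfl (v := Y) (v' := Y')
        · intro j hj
          simp only [Finset.mem_filter, Finset.mem_univ, true_and] at hj
          have hji : j ≠ i0 := fun h => (h ▸ hj.1) hi0R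
          rw [hY'eq j hji]
        · exact h4 i hiR
    exact IH R' Y' ρ' hcard' h0' h1' h2' hinj' h3' h4'

end Aux

/-- Graph-restricted fair exchange admits a globally Pareto-undominated pure Nash
equilibrium: there is an equilibrium `X*` such that no nonnegative profile Pareto-dominates
it. -/
theorem graph_exists_pareto_undominated_equilibrium (n : ℕ) (hn : 1 ≤ n)
    (G : SimpleGraph (Fin n)) [DecidableRel G.Adj]
    (b : Fin n → ℝ → ℝ) (c : Fin n → ℝ)
    (hc : ∀ i, 0 < c i)
    (hbc : ∀ i, ContinuousOn (b i) (Set.Ici 0))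
    (hbm : ∀ i, MonotoneOn (b i) (Set.Ici 0))
    (hbconc : ∀ i, ConcaveOn ℝ (Set.Ici 0) (b i))
    (hvanish : ∀ i, Filter.Tendsto (fun t : ℝ => b i (t + 1) - b i t)
      Filter.atTop (nhds 0)) :
    ∃ Xstar : Fin n → ℝ, IsNEG G b c Xstar ∧
      ¬ ∃ X' : Fin n → ℝ, (∀ i, 0 ≤ X' i) ∧
        (∀ i, UG G b c Xstar i ≤ UG G b c X' i) ∧
        (∃ j, UG G b c Xstar j < UG G b c X' j) := by
  classical
  -- run the freezing construction starting from everything unfrozen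
  obtain ⟨Z, σ, hZ0, hZord, hσinj, hZlm⟩ :=
    rec_freeze G b c hc hbc hbm hbconc hvanish n univ (fun _ => 0) (fun _ => 0)
      (by simp)
      (fun _ => le_rfl)
      (fun j j' hj _ _ => absurd (Finset.mem_univ j) hj)
      (fun j hj => absurd (Finset.mem_univ j) hj)
      (fun j j' hj _ _ => absurd (Finset.mem_univ j) hj)
      (by
        intro i _
        obtain ⟨s, hs⟩ := exists_lm G b c (i := i)
          (S := univ.filter (fun j => j ∉ (univ : Finset (Fin n)))) (v := fun _ => 0)
          (hc i) (hbc i) (hbm i) (hbconc i) (hvanish i) (fun _ => le_rfl)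
        exact ⟨s, hs, fun j hj => absurd (Finset.mem_univ j) hj⟩)
      (fun i hi => absurd (Finset.mem_univ i) hi)
  set Si : Fin n → Finset (Fin n) := fun i => univ.filter (fun j => σ j < σ i) with hSi
  -- neighbors outside `Si i` have larger values
  have hK1 : ∀ i j, j ∈ G.neighborFinset i → j ∉ Si i → Z i ≤ Z j := by
    intro i j hj hjS
    have hji : j ≠ i := by
      intro h
      rw [h] at hj
      exact G.notMem_neighborFinset_self i hj
    have hσ : ¬ σ j < σ i := by
      intro h
      exact hjS (by simp [hSi, h])
    have hσne : σ i ≠ σ j := fun h => hji (hσinj h.symm)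
    have : σ i < σ j := by omega
    exact hZord i j this
  -- the true utility at Z equals the surrogate value
  have hK3 : ∀ i, UG G b c Z i = Hf G b c i (Si i) Z (Z i) := by
    intro i
    have hsum : ∑ j ∈ G.neighborFinset i, min (Z i) (Z j) =
        ∑ j ∈ G.neighborFinset i, (if j ∈ Si i then min (Z i) (Z j) else Z i) := by
      apply Finset.sum_congr rfl
      intro j hj
      by_cases hjS : j ∈ Si i
      · rw [if_pos hjS]
      · rw [if_neg hjS]
        exact min_eq_left (hK1 i j hj hjS)
    unfold UG totalG Hf Af
    rw [hsum]
  -- nonnegativity of the true total data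
  have hargpos : ∀ (W : Fin n → ℝ), (∀ j, 0 ≤ W j) → ∀ i (y : ℝ), 0 ≤ y →
      0 ≤ y + ∑ j ∈ G.neighborFinset i, min y (W j) := by
    intro W hW i y hy
    have : 0 ≤ ∑ j ∈ G.neighborFinset i, min y (W j) :=
      Finset.sum_nonneg (fun j _ => le_min hy (hW j))
    linarith
  -- deviation bound: any play y against profile W (nonneg, with W j ≤ Z j on Si i)
  -- is dominated by the surrogate at y
  have hK2 : ∀ i (W : Fin n → ℝ), (∀ j, 0 ≤ W j) →
      (∀ j, j ∈ Si i → W j ≤ Z j) → ∀ y : ℝ, 0 ≤ y →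
      b i (y + ∑ j ∈ G.neighborFinset i, min y (W j)) - c i * y ≤
        Hf G b c i (Si i) Z y := by
    intro i W hW hWZ y hy
    unfold Hf Af
    have hsum : ∑ j ∈ G.neighborFinset i, min y (W j) ≤
        ∑ j ∈ G.neighborFinset i, (if j ∈ Si i then min y (Z j) else y) := by
      apply Finset.sum_le_sum
      intro j hj
      by_cases hjS : j ∈ Si i
      · rw [if_pos hjS]
        exact min_le_min le_rfl (hWZ j hjS)
      · rw [if_neg hjS]
        exact min_le_left _ _
    have h1 : 0 ≤ y + ∑ j ∈ G.neighborFinset i, min y (W j) := hargpos W hW i y hy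
    have h2 : b i (y + ∑ j ∈ G.neighborFinset i, min y (W j)) ≤
        b i (y + ∑ j ∈ G.neighborFinset i, (if j ∈ Si i then min y (Z j) else y)) :=
      (hbm i) (Set.mem_Ici.2 h1) (Set.mem_Ici.2 (by linarith)) (by linarith)
    linarith
  refine ⟨Z, ⟨hZ0, ?_⟩, ?_⟩
  · -- Nash equilibrium
    intro i y hy
    have hdev : totalG G (Function.update Z i y) i =
        y + ∑ j ∈ G.neighborFinset i, min y (Z j) := by
      unfold totalG
      rw [Function.update_self]
      congr 1
      apply Finset.sum_congr rfl
      intro j hj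
      have hji : j ≠ i := by
        intro h
        rw [h] at hj
        exact G.notMem_neighborFinset_self i hj
      rw [Function.update_of_ne hji]
    have h1 : UG G b c (Function.update Z i y) i =
        b i (y + ∑ j ∈ G.neighborFinset i, min y (Z j)) - c i * y := by
      unfold UG
      rw [hdev, Function.update_self]
    rw [h1, hK3 i]
    calc b i (y + ∑ j ∈ G.neighborFinset i, min y (Z j)) - c i * y
        ≤ Hf G b c i (Si i) Z y := hK2 i Z hZ0 (fun j _ => le_rfl) y hy
      _ ≤ Hf G b c i (Si i) Z (Z i) := (hZlm i).2.1 y hy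
  · -- Pareto-undominated
    rintro ⟨X', hX'0, hdom, j0, hstrict⟩
    have hUX' : ∀ i, (∀ j, σ j < σ i → X' j ≤ Z j) →
        UG G b c X' i ≤ Hf G b c i (Si i) Z (X' i) := by
      intro i hIH
      have : UG G b c X' i =
          b i (X' i + ∑ j ∈ G.neighborFinset i, min (X' i) (X' j)) - c i * X' i := by
        unfold UG totalG
        rfl
      rw [this]
      exact hK2 i X' hX'0 (fun j hjS => hIH j (by simpa [hSi] using hjS)) (X' i) (hX'0 i)
    have hkey : ∀ k : ℕ, ∀ i, σ i = k → X' i ≤ Z i := by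
      intro k
      induction k using Nat.strongRecOn with
      | ind k IH =>
        intro i hik
        have hIH : ∀ j, σ j < σ i → X' j ≤ Z j := by
          intro j hj
          exact IH (σ j) (hik ▸ hj) j rfl
        have e1 := hUX' i hIH
        have e2 : Hf G b c i (Si i) Z (X' i) ≤ Hf G b c i (Si i) Z (Z i) :=
          (hZlm i).2.1 (X' i) (hX'0 i)
        have e3 := hdom i
        rw [hK3 i] at e3
        have e4 : Hf G b c i (Si i) Z (X' i) = Hf G b c i (Si i) Z (Z i) := by linarith
        exact (hZlm i).2.2 (X' i) (hX'0 i) e4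
    have hIH0 : ∀ j, σ j < σ j0 → X' j ≤ Z j := fun j _ => hkey (σ j) j rfl
    have e1 := hUX' j0 hIH0
    have e2 : Hf G b c j0 (Si j0) Z (X' j0) ≤ Hf G b c j0 (Si j0) Z (Z j0) :=
      (hZlm j0).2.1 (X' j0) (hX'0 j0)
    rw [hK3 j0] at hstrict
    linarith
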